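/- Let Q be a real orthogonal n×n matrix, λ : n → ℝ with all λ_i > 0, K = Qᵀ·diagonal(λ)·Q, and Y ∈ ℝⁿ. Define f(t) = (I − exp(−t·K))·Y. Then f(t) → Y as t → ∞. (This is the paper's claim that under NTK gradient-flow dynamics with a positive definite kernel the network output converges to the training targets.) -/

import Mathlib

open Filter

/-- Under NTK gradient-flow dynamics with a positive definite kernel, the network output
converges to the training targets: `f t → Y` as `t → ∞`. -/
theorem ntk_dynamics_tendsto {n : Type*} [Fintype n] [DecidableEq n]
    (Q : Matrix n n ℝ) (hQ : Q.transpose * Q = 1) (l : n → ℝ) (hl : ∀ i, 0 < l i)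
    (Y : n → ℝ) (f : ℝ → n → ℝ)
    (hf : ∀ t : ℝ, f t =
      ((1 : Matrix n n ℝ) -
        NormedSpace.exp ((-t) • (Q.transpose * Matrix.diagonal l * Q))).mulVec Y) :
    Tendsto f atTop (nhds Y) := by
  have hQQ : Q * Q.transpose = 1 := mul_eq_one_comm.mp hQ
  set u : (Matrix n n ℝ)ˣ := ⟨Q.transpose, Q, hQ, hQQ⟩ with hu
  have hexp : ∀ t : ℝ,
      NormedSpace.exp ((-t) • (Q.transpose * Matrix.diagonal l * Q)) =
        Q.transpose * Matrix.diagonal (fun i => Real.exp ((-t) * l i)) * Q := by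
    intro t
    have h1 : (-t) • (Q.transpose * Matrix.diagonal l * Q) =
        (u : Matrix n n ℝ) * ((-t) • Matrix.diagonal l) * (↑u⁻¹ : Matrix n n ℝ) := by
      simp [hu, Matrix.mul_smul, Matrix.smul_mul]
    rw [h1, Matrix.exp_units_conj]
    have h2 : (-t) • Matrix.diagonal l = Matrix.diagonal (fun i => (-t) * l i) := by
      rw [← Matrix.diagonal_smul]; rfl
    rw [h2, Matrix.exp_diagonal]
    have h3 : NormedSpace.exp (fun i => (-t) * l i) =
        fun i => Real.exp ((-t) * l i) := by
      ext i
      simp [Pi.coe_exp, Real.exp_eq_exp_ℝ]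
    rw [h3]
    rfl
  have hD : Tendsto (fun t : ℝ => Matrix.diagonal (fun i => Real.exp ((-t) * l i)))
      atTop (nhds (0 : Matrix n n ℝ)) := by
    refine tendsto_pi_nhds.mpr ?_
    intro i
    rw [tendsto_pi_nhds]
    intro j
    by_cases h : i = j
    · subst h
      have harg : Tendsto (fun t : ℝ => (-t) * l i) atTop atBot := by
        have h0 : Tendsto (fun t : ℝ => t * l i) atTop atTop :=
          Tendsto.atTop_mul_const (hl i) tendsto_id
        have h1 := tendsto_neg_atBot_iff.mpr h0
        exact h1.congr (fun t => by ring)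
      have hcomp := Real.tendsto_exp_atBot.comp harg
      simp only [Function.comp_def] at hcomp
      have hgoal : (fun t : ℝ => Matrix.diagonal (fun i => Real.exp ((-t) * l i)) i i)
          = fun t : ℝ => Real.exp ((-t) * l i) := by
        funext t
        simp [Matrix.diagonal_apply_eq]
      rw [hgoal]
      simpa using hcomp
    · simp only [Matrix.diagonal_apply_ne _ h]
      exact tendsto_const_nhds
  have hE : Tendsto (fun t : ℝ =>
      NormedSpace.exp ((-t) • (Q.transpose * Matrix.diagonal l * Q)))
      atTop (nhds (0 : Matrix n n ℝ)) := by
    have h := (hD.const_mul (Q.transpose)).mul_const Q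
    simp only [Matrix.zero_mul, Matrix.mul_zero] at h
    exact Tendsto.congr (fun t => (hexp t).symm) h
  have hcont : Continuous fun M : Matrix n n ℝ =>
      ((1 : Matrix n n ℝ) - M).mulVec Y := by
    apply Continuous.matrix_mulVec
    · exact continuous_const.sub continuous_id
    · exact continuous_const
  have h := (hcont.tendsto 0).comp hE
  simp only [Function.comp, sub_zero, Matrix.one_mulVec] at h
  exact h.congr (fun t => (hf t).symm)
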